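/- For every λ ∈ ℝ, the function u(x,y) = -ln[ (1 - 2λx + λ²r²)·cosh( (x - λr²) / (1 - 2λx + λ²r²) ) ], where r² = x² + y², is a C² solution of the elliptic Liouville equation u_xx + u_yy + exp(2u) = 0 on the open set where 1 - 2λx + λ²r² > 0. (For λ = 0 this reduces to the Harris sheet solution u = -ln cosh x.) -/

import Mathlib

set_option maxHeartbeats 4000000
set_option maxRecDepth 100000

lemma hasDerivAt_quad (a b e t : ℝ) :
    HasDerivAt (fun s : ℝ => a + b*s + e*s^2) (b + 2*e*t) t := by
  have h : HasDerivAt (fun s : ℝ => a + b*s + e*s^2)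
      (0 + b * 1 + e * ((2:ℕ) * t ^ (2-1))) t :=
    (((hasDerivAt_const t a).add ((hasDerivAt_id t).const_mul b)).add
      ((hasDerivAt_pow 2 t).const_mul e))
  convert h using 1; push_cast; ring

/-- first derivative of the deformed Harris profile in one variable -/
lemma aux1 (a b e A B E t : ℝ) (hq : 0 < a + b*t + e*t^2) :
    HasDerivAt (fun s : ℝ => -Real.log ((a + b*s + e*s^2) *
        Real.cosh ((A + B*s + E*s^2) / (a + b*s + e*s^2))))
      (-((b+2*e*t)/(a+b*t+e*t^2))
        - Real.sinh ((A+B*t+E*t^2)/(a+b*t+e*t^2))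
          / Real.cosh ((A+B*t+E*t^2)/(a+b*t+e*t^2))
          * (((B+2*E*t)*(a+b*t+e*t^2) - (A+B*t+E*t^2)*(b+2*e*t))/(a+b*t+e*t^2)^2)) t := by
  have hq' : (a + b*t + e*t^2) ≠ 0 := hq.ne'
  have hc : 0 < Real.cosh ((A+B*t+E*t^2)/(a+b*t+e*t^2)) := Real.cosh_pos _
  have hqd := hasDerivAt_quad a b e t
  have hnd := hasDerivAt_quad A B E t
  have hw : HasDerivAt (fun s : ℝ => (A+B*s+E*s^2)/(a+b*s+e*s^2)) _ t := hnd.div hqd hq'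
  have hco := (Real.hasDerivAt_cosh _).comp t hw
  have hg : HasDerivAt (fun s : ℝ => (a+b*s+e*s^2) * Real.cosh ((A+B*s+E*s^2)/(a+b*s+e*s^2))) _ t := hqd.mul hco
  have hne : (a+b*t+e*t^2) * Real.cosh ((A+B*t+E*t^2)/(a+b*t+e*t^2)) ≠ 0 :=
    (mul_pos hq hc).ne'
  have hl : HasDerivAt (fun s : ℝ => -Real.log ((a+b*s+e*s^2) * Real.cosh ((A+B*s+E*s^2)/(a+b*s+e*s^2)))) _ t := (hg.log hne).neg
  convert hl using 1
  set q : ℝ := a+b*t+e*t^2 with hqd2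
  set X : ℝ := ((B+2*E*t)*q - (A+B*t+E*t^2)*(b+2*e*t))/q^2 with hX
  set C : ℝ := Real.cosh ((A+B*t+E*t^2)/q) with hC
  set S : ℝ := Real.sinh ((A+B*t+E*t^2)/q) with hS
  have hcne : C ≠ 0 := hc.ne'
  field_simp
  ring

/-- second derivative of the deformed Harris profile in one variable -/
lemma aux2 (a b e A B E t : ℝ) (hq : 0 < a + b*t + e*t^2) :
    HasDerivAt (fun s : ℝ =>
      -((b+2*e*s)/(a+b*s+e*s^2))
        - Real.sinh ((A+B*s+E*s^2)/(a+b*s+e*s^2))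
          / Real.cosh ((A+B*s+E*s^2)/(a+b*s+e*s^2))
          * (((B+2*E*s)*(a+b*s+e*s^2) - (A+B*s+E*s^2)*(b+2*e*s))/(a+b*s+e*s^2)^2))
      (-((2*e*(a+b*t+e*t^2) - (b+2*e*t)^2)/(a+b*t+e*t^2)^2)
       - (((Real.cosh ((A+B*t+E*t^2)/(a+b*t+e*t^2))^2
            - Real.sinh ((A+B*t+E*t^2)/(a+b*t+e*t^2))^2)
           / Real.cosh ((A+B*t+E*t^2)/(a+b*t+e*t^2))^2
           * (((B+2*E*t)*(a+b*t+e*t^2) - (A+B*t+E*t^2)*(b+2*e*t))/(a+b*t+e*t^2)^2))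
            * (((B+2*E*t)*(a+b*t+e*t^2) - (A+B*t+E*t^2)*(b+2*e*t))/(a+b*t+e*t^2)^2)
          + Real.sinh ((A+B*t+E*t^2)/(a+b*t+e*t^2))
            / Real.cosh ((A+B*t+E*t^2)/(a+b*t+e*t^2))
            * ((2*E*(a+b*t+e*t^2) - 2*e*(A+B*t+E*t^2))/(a+b*t+e*t^2)^2
               - 2*(b+2*e*t)*((B+2*E*t)*(a+b*t+e*t^2) - (A+B*t+E*t^2)*(b+2*e*t))
                 /(a+b*t+e*t^2)^3))) t := by
  have hq' : (a + b*t + e*t^2) ≠ 0 := hq.ne'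
  have hc : 0 < Real.cosh ((A+B*t+E*t^2)/(a+b*t+e*t^2)) := Real.cosh_pos _
  have hqd := hasDerivAt_quad a b e t
  have hnd := hasDerivAt_quad A B E t
  have hqd' := hasDerivAt_quad b (2*e) 0 t
  have hnd' := hasDerivAt_quad B (2*E) 0 t
  have hw : HasDerivAt (fun s : ℝ => (A+B*s+E*s^2)/(a+b*s+e*s^2)) _ t := hnd.div hqd hq'
  have hco := (Real.hasDerivAt_cosh _).comp t hw
  have hsi := (Real.hasDerivAt_sinh _).comp t hw
  have h1 : HasDerivAt (fun s : ℝ => (b+2*e*s)/(a+b*s+e*s^2))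
      ((2*e*(a+b*t+e*t^2) - (b+2*e*t)^2)/(a+b*t+e*t^2)^2) t := by
    have h : HasDerivAt (fun s : ℝ => (b+2*e*s+0*s^2)/(a+b*s+e*s^2)) _ t := hqd'.div hqd hq'
    convert h using 1
    · funext s; ring_nf
    · field_simp; ring
  have htan : HasDerivAt (fun s : ℝ => Real.sinh ((A+B*s+E*s^2)/(a+b*s+e*s^2))
      / Real.cosh ((A+B*s+E*s^2)/(a+b*s+e*s^2)))
      ((Real.cosh ((A+B*t+E*t^2)/(a+b*t+e*t^2))^2
          - Real.sinh ((A+B*t+E*t^2)/(a+b*t+e*t^2))^2)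
        / Real.cosh ((A+B*t+E*t^2)/(a+b*t+e*t^2))^2
        * (((B+2*E*t)*(a+b*t+e*t^2) - (A+B*t+E*t^2)*(b+2*e*t))/(a+b*t+e*t^2)^2)) t := by
    have h : HasDerivAt (fun s : ℝ => Real.sinh ((A+B*s+E*s^2)/(a+b*s+e*s^2)) / Real.cosh ((A+B*s+E*s^2)/(a+b*s+e*s^2))) _ t :=
      hsi.div hco hc.ne'
    convert h using 1
    simp only [Function.comp]
    set q : ℝ := a+b*t+e*t^2
    set X : ℝ := ((B+2*E*t)*q - (A+B*t+E*t^2)*(b+2*e*t))/q^2 with hX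
    set C : ℝ := Real.cosh ((A+B*t+E*t^2)/q) with hC
    set S : ℝ := Real.sinh ((A+B*t+E*t^2)/q) with hS
    have hcne : C ≠ 0 := hc.ne'
    field_simp
  have hAq : HasDerivAt (fun s : ℝ => (B+2*E*s+0*s^2)*(a+b*s+e*s^2) - (A+B*s+E*s^2)*(b+2*e*s+0*s^2)) _ t :=
    (hnd'.mul hqd).sub (hnd.mul hqd')
  have hq2 : HasDerivAt (fun s : ℝ => (a+b*s+e*s^2)*(a+b*s+e*s^2)) _ t := hqd.mul hqd
  have hq2ne : (a+b*t+e*t^2) * (a+b*t+e*t^2) ≠ 0 := (mul_pos hq hq).ne'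
  have hfrac : HasDerivAt (fun s : ℝ =>
      ((B+2*E*s)*(a+b*s+e*s^2) - (A+B*s+E*s^2)*(b+2*e*s))/(a+b*s+e*s^2)^2)
      ((2*E*(a+b*t+e*t^2) - 2*e*(A+B*t+E*t^2))/(a+b*t+e*t^2)^2
        - 2*(b+2*e*t)*((B+2*E*t)*(a+b*t+e*t^2) - (A+B*t+E*t^2)*(b+2*e*t))
          /(a+b*t+e*t^2)^3) t := by
    have h : HasDerivAt (fun s : ℝ => ((B+2*E*s+0*s^2)*(a+b*s+e*s^2) - (A+B*s+E*s^2)*(b+2*e*s+0*s^2))/((a+b*s+e*s^2)*(a+b*s+e*s^2))) _ t :=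
      hAq.div hq2 hq2ne
    convert h using 1
    · funext s; rw [sq]; ring_nf
    · field_simp; ring
  have hfinal : HasDerivAt (fun s : ℝ => -((b+2*e*s)/(a+b*s+e*s^2)) - Real.sinh ((A+B*s+E*s^2)/(a+b*s+e*s^2)) / Real.cosh ((A+B*s+E*s^2)/(a+b*s+e*s^2))
      * (((B+2*E*s)*(a+b*s+e*s^2) - (A+B*s+E*s^2)*(b+2*e*s))/(a+b*s+e*s^2)^2)) _ t := (h1.neg).sub (htan.mul hfrac)
  convert hfinal using 1

/-- For every `λ ∈ ℝ`, the function
`u(x,y) = -ln[ (1 - 2λx + λ²r²)·cosh( (x - λr²) / (1 - 2λx + λ²r²) ) ]`, `r² = x² + y²`,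
is a C² solution of the elliptic Liouville equation `u_xx + u_yy + exp(2u) = 0` on the
open set where `1 - 2λx + λ²r² > 0`. For `λ = 0` it reduces to the Harris sheet solution
`u = -ln cosh x`. -/
theorem deformed_harris_solves_liouville (lam : ℝ) :
    let D : ℝ → ℝ → ℝ := fun x y => 1 - 2 * lam * x + lam ^ 2 * (x ^ 2 + y ^ 2)
    let u : ℝ → ℝ → ℝ := fun x y =>
      -Real.log (D x y * Real.cosh ((x - lam * (x ^ 2 + y ^ 2)) / D x y))
    (ContDiffOn ℝ 2 (fun p : ℝ × ℝ => u p.1 p.2) {p : ℝ × ℝ | 0 < D p.1 p.2}) ∧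
    (∀ x y : ℝ, 0 < D x y →
      deriv (deriv (fun x' : ℝ => u x' y)) x
        + deriv (deriv (fun y' : ℝ => u x y')) y
        + Real.exp (2 * u x y) = 0) ∧
    (lam = 0 → ∀ x y : ℝ, u x y = -Real.log (Real.cosh x)) := by
  intro D u
  refine ⟨?_, ?_, ?_⟩
  · -- smoothness
    show ContDiffOn ℝ 2 (fun p : ℝ × ℝ =>
      -Real.log ((1 - 2 * lam * p.1 + lam ^ 2 * (p.1 ^ 2 + p.2 ^ 2)) *
        Real.cosh ((p.1 - lam * (p.1 ^ 2 + p.2 ^ 2)) /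
          (1 - 2 * lam * p.1 + lam ^ 2 * (p.1 ^ 2 + p.2 ^ 2)))))
      {p : ℝ × ℝ | 0 < 1 - 2 * lam * p.1 + lam ^ 2 * (p.1 ^ 2 + p.2 ^ 2)}
    have hDc : ContDiff ℝ 2 (fun p : ℝ × ℝ =>
        1 - 2 * lam * p.1 + lam ^ 2 * (p.1 ^ 2 + p.2 ^ 2)) := by fun_prop
    have hNc : ContDiff ℝ 2 (fun p : ℝ × ℝ => p.1 - lam * (p.1 ^ 2 + p.2 ^ 2)) := by fun_prop
    have hwc : ContDiffOn ℝ 2 (fun p : ℝ × ℝ =>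
        (p.1 - lam * (p.1 ^ 2 + p.2 ^ 2)) /
          (1 - 2 * lam * p.1 + lam ^ 2 * (p.1 ^ 2 + p.2 ^ 2)))
        {p : ℝ × ℝ | 0 < 1 - 2 * lam * p.1 + lam ^ 2 * (p.1 ^ 2 + p.2 ^ 2)} :=
      hNc.contDiffOn.div hDc.contDiffOn (fun p hp => (Set.mem_setOf.mp hp).ne')
    have hcoshc := (Real.contDiff_cosh.of_le le_top).comp_contDiffOn hwc
    refine (ContDiffOn.log (hDc.contDiffOn.mul hcoshc) ?_).neg
    intro p hp
    exact (mul_pos (Set.mem_setOf.mp hp) (Real.cosh_pos _)).ne'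
  · -- the PDE
    intro x y hD0
    have hD : (0:ℝ) < 1 - 2 * lam * x + lam ^ 2 * (x ^ 2 + y ^ 2) := hD0
    have hDx : (0:ℝ) < (1+lam^2*y^2) + (-(2*lam))*x + lam^2*x^2 := hD.trans_eq (by ring)
    have hDy : (0:ℝ) < (1-2*lam*x+lam^2*x^2) + 0*y + lam^2*y^2 := hD.trans_eq (by ring)
    -- x-direction
    have huxeq : (fun x' : ℝ => u x' y)
        = (fun s : ℝ => -Real.log (((1+lam^2*y^2) + (-(2*lam))*s + lam^2*s^2) *
            Real.cosh (((-(lam*y^2)) + 1*s + (-lam)*s^2)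
              / ((1+lam^2*y^2) + (-(2*lam))*s + lam^2*s^2)))) := by
      funext s
      show -Real.log ((1 - 2 * lam * s + lam ^ 2 * (s ^ 2 + y ^ 2)) *
        Real.cosh ((s - lam * (s ^ 2 + y ^ 2)) /
          (1 - 2 * lam * s + lam ^ 2 * (s ^ 2 + y ^ 2)))) = _
      ring_nf
    have huyeq : (fun y' : ℝ => u x y')
        = (fun s : ℝ => -Real.log (((1-2*lam*x+lam^2*x^2) + 0*s + lam^2*s^2) *
            Real.cosh (((x-lam*x^2) + 0*s + (-lam)*s^2)
              / ((1-2*lam*x+lam^2*x^2) + 0*s + lam^2*s^2)))) := by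
      funext s
      show -Real.log ((1 - 2 * lam * x + lam ^ 2 * (x ^ 2 + s ^ 2)) *
        Real.cosh ((x - lam * (x ^ 2 + s ^ 2)) /
          (1 - 2 * lam * x + lam ^ 2 * (x ^ 2 + s ^ 2)))) = _
      ring_nf
    -- open sets
    have hopenx : IsOpen {s : ℝ | 0 < (1+lam^2*y^2) + (-(2*lam))*s + lam^2*s^2} :=
      isOpen_lt continuous_const (by fun_prop)
    have hopeny : IsOpen {s : ℝ | 0 < (1-2*lam*x+lam^2*x^2) + 0*s + lam^2*s^2} :=
      isOpen_lt continuous_const (by fun_prop)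
    have hmemx : {s : ℝ | 0 < (1+lam^2*y^2) + (-(2*lam))*s + lam^2*s^2} ∈ nhds x :=
      hopenx.mem_nhds hDx
    have hmemy : {s : ℝ | 0 < (1-2*lam*x+lam^2*x^2) + 0*s + lam^2*s^2} ∈ nhds y :=
      hopeny.mem_nhds hDy
    have hevx : (deriv (fun s : ℝ => -Real.log (((1+lam^2*y^2) + (-(2*lam))*s + lam^2*s^2) *
            Real.cosh (((-(lam*y^2)) + 1*s + (-lam)*s^2)
              / ((1+lam^2*y^2) + (-(2*lam))*s + lam^2*s^2)))))
        =ᶠ[nhds x] (fun t : ℝ =>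
          (-(((-(2*lam))+2*lam^2*t)/((1+lam^2*y^2)+(-(2*lam))*t+lam^2*t^2))
            - Real.sinh (((-(lam*y^2))+1*t+(-lam)*t^2)/((1+lam^2*y^2)+(-(2*lam))*t+lam^2*t^2))
              / Real.cosh (((-(lam*y^2))+1*t+(-lam)*t^2)/((1+lam^2*y^2)+(-(2*lam))*t+lam^2*t^2))
              * (((1+2*(-lam)*t)*((1+lam^2*y^2)+(-(2*lam))*t+lam^2*t^2)
                  - ((-(lam*y^2))+1*t+(-lam)*t^2)*((-(2*lam))+2*lam^2*t))
                /((1+lam^2*y^2)+(-(2*lam))*t+lam^2*t^2)^2))) :=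
      Filter.eventuallyEq_of_mem hmemx (fun s hs =>
        (aux1 (1+lam^2*y^2) (-(2*lam)) (lam^2) (-(lam*y^2)) 1 (-lam) s hs).deriv)
    have hevy : (deriv (fun s : ℝ => -Real.log (((1-2*lam*x+lam^2*x^2) + 0*s + lam^2*s^2) *
            Real.cosh (((x-lam*x^2) + 0*s + (-lam)*s^2)
              / ((1-2*lam*x+lam^2*x^2) + 0*s + lam^2*s^2)))))
        =ᶠ[nhds y] (fun t : ℝ =>
          (-((0+2*lam^2*t)/((1-2*lam*x+lam^2*x^2)+0*t+lam^2*t^2))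
            - Real.sinh (((x-lam*x^2)+0*t+(-lam)*t^2)/((1-2*lam*x+lam^2*x^2)+0*t+lam^2*t^2))
              / Real.cosh (((x-lam*x^2)+0*t+(-lam)*t^2)/((1-2*lam*x+lam^2*x^2)+0*t+lam^2*t^2))
              * (((0+2*(-lam)*t)*((1-2*lam*x+lam^2*x^2)+0*t+lam^2*t^2)
                  - ((x-lam*x^2)+0*t+(-lam)*t^2)*(0+2*lam^2*t))
                /((1-2*lam*x+lam^2*x^2)+0*t+lam^2*t^2)^2))) :=
      Filter.eventuallyEq_of_mem hmemy (fun s hs =>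
        (aux1 (1-2*lam*x+lam^2*x^2) 0 (lam^2) (x-lam*x^2) 0 (-lam) s hs).deriv)
    rw [huxeq, huyeq, hevx.deriv_eq, hevy.deriv_eq,
      (aux2 (1+lam^2*y^2) (-(2*lam)) (lam^2) (-(lam*y^2)) 1 (-lam) x hDx).deriv,
      (aux2 (1-2*lam*x+lam^2*x^2) 0 (lam^2) (x-lam*x^2) 0 (-lam) y hDy).deriv]
    -- canonicalize polynomial forms
    have ed1 : (1+lam^2*y^2)+(-(2*lam))*x+lam^2*x^2
        = 1 - 2 * lam * x + lam ^ 2 * (x ^ 2 + y ^ 2) := by ring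
    have ed2 : (1-2*lam*x+lam^2*x^2)+0*y+lam^2*y^2
        = 1 - 2 * lam * x + lam ^ 2 * (x ^ 2 + y ^ 2) := by ring
    have en1 : (-(lam*y^2))+1*x+(-lam)*x^2 = x - lam * (x ^ 2 + y ^ 2) := by ring
    have en2 : (x-lam*x^2)+0*y+(-lam)*y^2 = x - lam * (x ^ 2 + y ^ 2) := by ring
    rw [ed1, ed2, en1, en2]
    set C : ℝ := Real.cosh
      ((x - lam * (x ^ 2 + y ^ 2)) / (1 - 2 * lam * x + lam ^ 2 * (x ^ 2 + y ^ 2))) with hC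
    set S : ℝ := Real.sinh
      ((x - lam * (x ^ 2 + y ^ 2)) / (1 - 2 * lam * x + lam ^ 2 * (x ^ 2 + y ^ 2))) with hS
    have hCpos : 0 < C := Real.cosh_pos _
    have hsq : C ^ 2 - S ^ 2 = 1 := Real.cosh_sq_sub_sinh_sq _
    -- exponential term
    have hexp : Real.exp (2 * u x y)
        = (((1 - 2 * lam * x + lam ^ 2 * (x ^ 2 + y ^ 2)) * C) ^ 2)⁻¹ := by
      show Real.exp (2 * -Real.log ((1 - 2 * lam * x + lam ^ 2 * (x ^ 2 + y ^ 2)) * C)) = _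
      rw [mul_neg, Real.exp_neg]
      congr 1
      rw [show (2:ℝ) * Real.log ((1 - 2 * lam * x + lam ^ 2 * (x ^ 2 + y ^ 2)) * C)
          = Real.log (((1 - 2 * lam * x + lam ^ 2 * (x ^ 2 + y ^ 2)) * C) ^ 2) from by
        rw [Real.log_pow]; push_cast; ring]
      exact Real.exp_log (pow_pos (mul_pos hD hCpos) 2)
    rw [hexp]
    have hDne : (1 - 2 * lam * x + lam ^ 2 * (x ^ 2 + y ^ 2)) ≠ 0 := hD.ne'
    have hCne : C ≠ 0 := hCpos.ne'
    clear_value D u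
    clear hD0 huxeq huyeq hopenx hopeny hmemx hmemy hevx hevy ed1 ed2 en1 en2 hexp u D hC hS
    rw [hsq]
    field_simp
    ring
  · -- Harris limit
    intro hlam x y
    subst hlam
    show -Real.log ((1 - 2 * 0 * x + 0 ^ 2 * (x ^ 2 + y ^ 2)) *
      Real.cosh ((x - 0 * (x ^ 2 + y ^ 2)) / (1 - 2 * 0 * x + 0 ^ 2 * (x ^ 2 + y ^ 2)))) = _
    norm_num
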